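/- For every p ∈ (0,1] and all real numbers a ≥ 1 and b ≥ 1, the positive numbers μ_m := Γ(a + m)·Γ(b) / (Γ(a)·Γ(b + p·m)), m = 1, 2, ..., satisfy Σ_{m=1}^{∞} μ_m^{−1/(2m)} = ∞. (This is Carleman's condition, so the Stieltjes moment problem with moment sequence (μ_m) is determinate.) -/

import Mathlib

open Filter

/-- Gamma is at least 1/2 on [1, ∞). -/
lemma gamma_ge_half {x : ℝ} (hx : 1 ≤ x) : (1/2 : ℝ) ≤ Real.Gamma x := by
  rcases le_or_gt 2 x with h | h
  · have h2 : Real.Gamma 2 ≤ Real.Gamma x := by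
      rcases eq_or_lt_of_le h with he | hlt
      · rw [← he]
      · exact (Real.Gamma_strictMonoOn_Ici (Set.mem_Ici.mpr le_rfl) (Set.mem_Ici.mpr (by linarith)) hlt).le
    rw [Real.Gamma_two] at h2
    linarith
  · have hx0 : 0 < x := by linarith
    have key : Real.Gamma (x + 1) = x * Real.Gamma x := Real.Gamma_add_one hx0.ne'
    have h2 : Real.Gamma 2 ≤ Real.Gamma (x + 1) := by
      rcases eq_or_lt_of_le (show (2:ℝ) ≤ x + 1 by linarith) with he | hlt
      · rw [← he]
      · exact (Real.Gamma_strictMonoOn_Ici (Set.mem_Ici.mpr le_rfl) (Set.mem_Ici.mpr (by linarith)) hlt).le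
    rw [Real.Gamma_two, key] at h2
    nlinarith [Real.Gamma_pos_of_pos hx0]

/-- `Γ(a+m) ≤ Γ(a) (a+m)^m` for `a ≥ 1`. -/
lemma gamma_add_nat_le {a : ℝ} (ha : 1 ≤ a) (m : ℕ) :
    Real.Gamma (a + m) ≤ Real.Gamma a * (a + m) ^ m := by
  induction m with
  | zero => simp
  | succ n ih =>
    have han : (0:ℝ) < a + n := by positivity
    have h1 : (a : ℝ) + (n + 1 : ℕ) = (a + n) + 1 := by push_cast; ring
    rw [h1, Real.Gamma_add_one han.ne']
    have hbase : (a + n : ℝ) ≤ a + (n + 1 : ℕ) := by push_cast; linarith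
    have hpow : (a + n : ℝ) ^ n ≤ (a + (n + 1 : ℕ)) ^ n :=
      pow_le_pow_left₀ han.le hbase n
    have hGpos : 0 < Real.Gamma a := Real.Gamma_pos_of_pos (by linarith)
    calc (a + n) * Real.Gamma (a + n) ≤ (a + n) * (Real.Gamma a * (a + n) ^ n) := by
          exact mul_le_mul_of_nonneg_left ih han.le
      _ = Real.Gamma a * ((a + n) * (a + n) ^ n) := by ring
      _ ≤ Real.Gamma a * ((a + (n + 1 : ℕ)) * (a + (n + 1 : ℕ)) ^ n) := by
          apply mul_le_mul_of_nonneg_left _ hGpos.le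
          exact mul_le_mul hbase hpow (by positivity) (by positivity)
      _ = Real.Gamma a * (a + (n + 1 : ℕ)) ^ (n + 1) := by rw [← pow_succ']
      _ = Real.Gamma a * (a + ↑n + 1) ^ (n + 1) := by push_cast; ring_nf

/-- For `p ∈ (0,1]` and reals `a, b ≥ 1`, the moments
`μ_m := Γ(a+m)Γ(b)/(Γ(a)Γ(b+pm))` satisfy Carleman's condition
`Σ_{m=1}^∞ μ_m^{-1/(2m)} = ∞`, i.e. the partial sums tend to infinity. -/
theorem stmt_19 (p : ℝ) (hp0 : 0 < p) (hp1 : p ≤ 1) (a b : ℝ) (ha : 1 ≤ a) (hb : 1 ≤ b) :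
    Tendsto (fun N : ℕ => ∑ m ∈ Finset.Icc 1 N,
        (Real.Gamma (a + m) * Real.Gamma b / (Real.Gamma a * Real.Gamma (b + p * m)))
          ^ (-(1 : ℝ) / (2 * m)))
      atTop atTop := by
  have hGa : 0 < Real.Gamma a := Real.Gamma_pos_of_pos (by linarith)
  have hGb : 0 < Real.Gamma b := Real.Gamma_pos_of_pos (by linarith)
  set K : ℝ := 2 * Real.Gamma b with hK
  have hK1 : 1 ≤ K := by
    have := gamma_ge_half hb
    rw [hK]; linarith
  set C : ℝ := K ^ (-(1:ℝ)/2) / (a + 1) with hC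
  have hCpos : 0 < C := by
    apply div_pos (Real.rpow_pos_of_pos (by linarith) _) (by linarith)
  -- pointwise bound
  have key : ∀ m : ℕ, 1 ≤ m →
      C * (1 / m) ≤ (Real.Gamma (a + m) * Real.Gamma b /
        (Real.Gamma a * Real.Gamma (b + p * m))) ^ (-(1 : ℝ) / (2 * m)) := by
    intro m hm
    have hm' : (1:ℝ) ≤ m := by exact_mod_cast hm
    have hmpos : (0:ℝ) < m := by linarith
    set μ : ℝ := Real.Gamma (a + m) * Real.Gamma b / (Real.Gamma a * Real.Gamma (b + p * m))
      with hμ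
    have hbpm : (0:ℝ) < b + p * m := by nlinarith
    have hGbpm : 0 < Real.Gamma (b + p * m) := Real.Gamma_pos_of_pos hbpm
    have hGam : 0 < Real.Gamma (a + m) := Real.Gamma_pos_of_pos (by positivity)
    have hμpos : 0 < μ := by positivity
    have hGhalf : (1/2 : ℝ) ≤ Real.Gamma (b + p * m) := gamma_ge_half (by nlinarith)
    -- μ ≤ K * (a+m)^m
    have hμle : μ ≤ K * (a + m) ^ m := by
      rw [hμ, div_le_iff₀ (by positivity)]
      have h1 : Real.Gamma (a + m) * Real.Gamma b ≤ Real.Gamma a * (a + m) ^ m * Real.Gamma b :=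
        mul_le_mul_of_nonneg_right (gamma_add_nat_le ha m) hGb.le
      calc Real.Gamma (a + m) * Real.Gamma b ≤ Real.Gamma a * (a + m) ^ m * Real.Gamma b := h1
        _ = (2 * Real.Gamma b * (a + m) ^ m) * (Real.Gamma a * (1/2)) := by ring
        _ ≤ (2 * Real.Gamma b * (a + m) ^ m) * (Real.Gamma a * Real.Gamma (b + p * m)) := by
            apply mul_le_mul_of_nonneg_left (mul_le_mul_of_nonneg_left hGhalf hGa.le)
            positivity
    have hexp_nonpos : (-(1:ℝ) / (2 * m)) ≤ 0 := by
      apply div_nonpos_of_nonpos_of_nonneg <;> linarith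
    -- monotone in base
    have step1 : (K * (a + m) ^ m) ^ (-(1:ℝ) / (2 * m)) ≤ μ ^ (-(1:ℝ) / (2 * m)) :=
      Real.rpow_le_rpow_of_nonpos hμpos hμle hexp_nonpos
    have hampos : (0:ℝ) < a + m := by linarith
    have hsplit : (K * (a + m) ^ m) ^ (-(1:ℝ) / (2 * m))
        = K ^ (-(1:ℝ) / (2 * m)) * (a + m) ^ (-(1:ℝ)/2) := by
      rw [Real.mul_rpow (by linarith) (by positivity), ← Real.rpow_natCast (a + m) m,
        ← Real.rpow_mul hampos.le]
      congr 2
      field_simp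
    have hKexp : K ^ (-(1:ℝ)/2) ≤ K ^ (-(1:ℝ) / (2 * m)) := by
      apply Real.rpow_le_rpow_of_exponent_le hK1
      rw [div_le_div_iff₀ (by norm_num) (by positivity)]
      nlinarith
    have hamexp : (a + m) ^ (-(1:ℝ)) ≤ (a + m) ^ (-(1:ℝ)/2) := by
      apply Real.rpow_le_rpow_of_exponent_le (by linarith)
      linarith
    have ham1 : (a + m) ^ (-(1:ℝ)) = 1 / (a + m) := by
      rw [Real.rpow_neg_one]; exact inv_eq_one_div _
    have hfrac : 1 / ((a+1) * m) ≤ 1 / (a + m) := by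
      apply one_div_le_one_div_of_le hampos
      nlinarith
    calc C * (1/m) = K ^ (-(1:ℝ)/2) * (1 / ((a+1) * m)) := by
          rw [hC]; field_simp
      _ ≤ K ^ (-(1:ℝ)/2) * (1 / (a + m)) := by
          apply mul_le_mul_of_nonneg_left hfrac (Real.rpow_pos_of_pos (by linarith) _).le
      _ = K ^ (-(1:ℝ)/2) * (a + m) ^ (-(1:ℝ)) := by rw [ham1]
      _ ≤ K ^ (-(1:ℝ) / (2 * m)) * (a + m) ^ (-(1:ℝ)/2) := by
          apply mul_le_mul hKexp hamexp (Real.rpow_pos_of_pos hampos _).le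
          exact (Real.rpow_pos_of_pos (by linarith) _).le
      _ = (K * (a + m) ^ m) ^ (-(1:ℝ) / (2 * m)) := hsplit.symm
      _ ≤ μ ^ (-(1:ℝ) / (2 * m)) := step1
  -- comparison with harmonic series
  have hlow : Tendsto (fun N : ℕ => C * ∑ i ∈ Finset.range N, (1:ℝ) / (i + 1))
      atTop atTop :=
    Tendsto.const_mul_atTop hCpos Real.tendsto_sum_range_one_div_nat_succ_atTop
  apply tendsto_atTop_mono _ hlow
  intro N
  rw [Finset.mul_sum]
  have heq : ∑ i ∈ Finset.range N, C * ((1:ℝ) / (i + 1))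
      = ∑ m ∈ Finset.Icc 1 N, C * ((1:ℝ) / m) := by
    rw [← Finset.Ico_add_one_right_eq_Icc, Finset.sum_Ico_eq_sum_range]
    apply Finset.sum_congr rfl
    intro i _
    push_cast
    ring_nf
  rw [heq]
  apply Finset.sum_le_sum
  intro m hm
  exact key m (Finset.mem_Icc.mp hm).1
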